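/- Let φ : Δ^{0̂} → Δ be a group epimorphism and H ≤ Δ with H ⊄ Δ⁺. Then H φ⁻¹ ⊄ Δ⁺. (If φ(H) is orientable then H is orientable.) -/

import Mathlib

/-- The relations making each generator an involution. -/
def rels : Set (FreeGroup (Fin 3)) := {x | ∃ i, x = (FreeGroup.of i) ^ 2}

/-- Δ = C₂ * C₂ * C₂. -/
abbrev Δ := PresentedGroup rels

/-- The generators R₀, R₁, R₂ of Δ. -/
def R (i : Fin 3) : Δ := PresentedGroup.of i

/-- Δ^{0̂}, the normal closure of {R₁, R₂}, an index-2 subgroup of Δ. -/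
def Δ0 : Subgroup Δ := Subgroup.normalClosure {R 1, R 2}

/-- Δ⁺, the even-word subgroup of Δ. -/
def Δplus : Subgroup Δ := Subgroup.closure {R 1 * R 2, R 2 * R 0, R 0 * R 1}

/-- The preimage H φ⁻¹, regarded as a subgroup of Δ. -/
def preim (φ : Δ0 →* Δ) (H : Subgroup Δ) : Subgroup Δ :=
  (H.comap φ).map Δ0.subtype

/-- The kernel of φ, regarded as a subgroup of Δ. -/
def kerS (φ : Δ0 →* Δ) : Subgroup Δ := φ.ker.map Δ0.subtype

/-- The conjugate K^g = g⁻¹ K g. -/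
def conjS (K : Subgroup Δ) (g : Δ) : Subgroup Δ :=
  K.map (MulAut.conj g⁻¹).toMonoidHom

/-- The four involutions R₁, R₂, R₁^{R₀}, R₂^{R₀} generating Δ^{0̂}. -/
def gens : Set Δ := {R 1, R 2, (R 0)⁻¹ * R 1 * R 0, (R 0)⁻¹ * R 2 * R 0}

theorem fg_sq_aux {α : Type*} [DecidableEq α] : ∀ (n : ℕ) (x : FreeGroup α), x.toWord.length ≤ n →
    x * x = 1 → x = 1 := by
  intro n
  induction n with
  | zero =>
    intro x hx _
    rw [← FreeGroup.toWord_eq_nil_iff]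
    exact List.eq_nil_of_length_eq_zero (Nat.le_zero.mp hx)
  | succ n ih =>
    intro x hx hsq
    have hinv : x⁻¹ = x := inv_eq_of_mul_eq_one_right hsq
    have hL : FreeGroup.invRev x.toWord = x.toWord := by
      rw [← FreeGroup.toWord_inv, hinv]
    match hLdef : x.toWord with
    | [] => exact FreeGroup.toWord_eq_nil_iff.mp hLdef
    | [a] =>
      exfalso
      rw [hLdef] at hL
      simp [FreeGroup.invRev, Prod.ext_iff] at hL
    | a :: b :: T =>
      have hT' : (b :: T : List (α × Bool)) ≠ [] := List.cons_ne_nil _ _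
      set c := (b :: T).getLast hT' with hc_def
      set K := (b :: T).dropLast with hK_def
      have hsplit : x.toWord = a :: (K ++ [c]) := by
        rw [hLdef, hK_def, hc_def, List.dropLast_append_getLast hT']
      have hfc : ((c.1, !c.2) : α × Bool) = a := by
        have hh := congrArg List.head? hL
        rw [hsplit] at hh
        simp [FreeGroup.invRev, List.head?_append] at hh
        exact hh
      have hc : c = (a.1, !a.2) := by rw [← hfc]; simp
      set s := FreeGroup.mk [a] with hs_def
      have hsinv : FreeGroup.mk [(a.1, !a.2)] = s⁻¹ := by
        rw [hs_def, FreeGroup.inv_mk]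
        rfl
      set y := FreeGroup.mk K with hy_def
      have hxs : x = s * y * s⁻¹ := by
        conv_lhs => rw [← FreeGroup.mk_toWord (x := x)]
        rw [hsplit, hc, ← hsinv, hs_def, hy_def, FreeGroup.mul_mk, FreeGroup.mul_mk]
        simp
      have hy2 : y * y = 1 := by
        have h1 : s * (y * y) * s⁻¹ = 1 := by
          rw [← hsq, hxs]; group
        have : y * y = s⁻¹ * (s * (y * y) * s⁻¹) * s := by group
        rw [h1] at this
        simpa using this
      have hyn : y.toWord.length ≤ n := by
        have h1 : y.toWord.length ≤ K.length := FreeGroup.norm_mk_le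
        have h2 : x.toWord.length = K.length + 2 := by rw [hsplit]; simp
        omega
      have := ih y hyn hy2
      rw [hxs, this, mul_one, mul_inv_cancel]

theorem fg_sq {α : Type*} [DecidableEq α] {x : FreeGroup α} (h : x * x = 1) : x = 1 :=
  fg_sq_aux x.toWord.length x le_rfl h

/-- Homomorphism from C₂ determined by an element of square one. -/
def homC2 {M : Type*} [Monoid M] (m : M) (h : m * m = 1) : Multiplicative (ZMod 2) →* M where
  toFun x := m ^ (Multiplicative.toAdd x).val
  map_one' := by simp
  map_mul' x y := by
    have h2 : m ^ 2 = 1 := by rw [pow_two]; exact h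
    show m ^ ((Multiplicative.toAdd x + Multiplicative.toAdd y).val) = _
    rw [ZMod.val_add, ← pow_eq_pow_mod _ h2, pow_add]

lemma homC2_ofAdd_one {M : Type*} [Monoid M] (m : M) (h : m * m = 1) :
    homC2 m h (Multiplicative.ofAdd 1) = m := by
  show m ^ (1 : ZMod 2).val = m
  rw [ZMod.val_one, pow_one]

/-- The automorphism of a free group inverting all generators. -/
def invMap {α : Type*} : FreeGroup α →* FreeGroup α := FreeGroup.lift fun i => (FreeGroup.of i)⁻¹

lemma invMap_invMap {α : Type*} (x : FreeGroup α) : invMap (invMap x) = x := by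
  have : (invMap (α := α)).comp invMap = MonoidHom.id _ := by
    apply FreeGroup.ext_hom
    intro a
    simp [invMap]
  exact DFunLike.congr_fun this x

def invAut {α : Type*} : MulAut (FreeGroup α) :=
  { toFun := invMap, invFun := invMap, left_inv := invMap_invMap,
    right_inv := invMap_invMap, map_mul' := map_mul invMap }

lemma invAut_sq {α : Type*} : (invAut (α := α)) * invAut = 1 := by
  ext x
  exact invMap_invMap x

def θ : Multiplicative (ZMod 2) →* MulAut (FreeGroup (Fin 2)) := homC2 invAut invAut_sq

abbrev Gsd := (FreeGroup (Fin 2)) ⋊[θ] Multiplicative (ZMod 2)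

def gword : Fin 3 → FreeGroup (Fin 2) := ![1, .of 0, .of 1]

def fgen : Fin 3 → Gsd := fun i => ⟨gword i, Multiplicative.ofAdd 1⟩

lemma fgen_sq (i : Fin 3) : fgen i * fgen i = 1 := by
  have hθ : θ (Multiplicative.ofAdd 1) = invAut := homC2_ofAdd_one _ _
  have hw : ∀ i, gword i * invAut (gword i) = 1 := by
    intro i
    fin_cases i <;> simp [gword, invAut, invMap]
  ext
  · show gword i * θ (Multiplicative.ofAdd 1) (gword i) = 1
    rw [hθ]; exact hw i
  · show (Multiplicative.ofAdd (1 : ZMod 2)) * .ofAdd 1 = 1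
    decide

lemma fgen_rels : ∀ r ∈ rels, FreeGroup.lift fgen r = 1 := by
  rintro r ⟨i, rfl⟩
  rw [map_pow, FreeGroup.lift_apply_of, pow_two]
  exact fgen_sq i

def σ : Δ →* Gsd := PresentedGroup.toGroup fgen_rels

lemma σ_R (i : Fin 3) : σ (R i) = fgen i := PresentedGroup.toGroup.of fgen_rels

def π : Δ →* Multiplicative (ZMod 2) := SemidirectProduct.rightHom.comp σ

lemma π_R (i : Fin 3) : π (R i) = Multiplicative.ofAdd 1 := by
  show SemidirectProduct.rightHom (σ (R i)) = _
  rw [σ_R]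
  rfl

lemma Rsq (i : Fin 3) : R i * R i = 1 := by
  have h : ((FreeGroup.of i) ^ 2 : FreeGroup (Fin 3)) ∈ Subgroup.normalClosure rels :=
    Subgroup.subset_normalClosure ⟨i, rfl⟩
  have h2 : (PresentedGroup.mk rels) ((FreeGroup.of i) ^ 2) = 1 :=
    (QuotientGroup.eq_one_iff _).mpr h
  rw [pow_two, map_mul] at h2
  exact h2

lemma Rinv (i : Fin 3) : (R i)⁻¹ = R i := inv_eq_of_mul_eq_one_right (Rsq i)

def τ : Gsd →* Δ :=
  SemidirectProduct.lift (FreeGroup.lift ![R 1 * R 0, R 2 * R 0]) (homC2 (R 0) (Rsq 0)) (by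
    intro g
    have hg : g = 1 ∨ g = Multiplicative.ofAdd 1 := by revert g; decide
    apply FreeGroup.ext_hom
    intro a
    rcases hg with rfl | rfl
    · simp
    · show FreeGroup.lift _ (θ (Multiplicative.ofAdd 1) (.of a)) = _
      rw [show θ (Multiplicative.ofAdd 1) = invAut from homC2_ofAdd_one _ _]
      show FreeGroup.lift _ (invMap (.of a)) = R 0 * (FreeGroup.lift _ (FreeGroup.of a)) * (R 0)⁻¹
      rw [invMap, FreeGroup.lift_apply_of, map_inv, FreeGroup.lift_apply_of, Rinv]
      fin_cases a <;>
        simp [mul_inv_rev, Rinv, mul_assoc, Rsq])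

lemma τ_σ (x : Δ) : τ (σ x) = x := by
  have : τ.comp σ = MonoidHom.id Δ := by
    apply PresentedGroup.ext
    intro i
    show τ (σ (R i)) = R i
    rw [σ_R]
    have : fgen i = SemidirectProduct.inl (gword i) * SemidirectProduct.inr (.ofAdd 1) :=
      SemidirectProduct.mk_eq_inl_mul_inr _ _
    rw [this, map_mul]
    show (SemidirectProduct.lift _ _ _) _ * (SemidirectProduct.lift _ _ _) _ = R i
    rw [SemidirectProduct.lift_inl, SemidirectProduct.lift_inr, homC2_ofAdd_one]
    fin_cases i <;> simp [gword, mul_assoc, Rsq]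
  exact DFunLike.congr_fun this x

lemma σ_inj : Function.Injective σ := by
  intro a b hab
  have := τ_σ a
  rw [hab, τ_σ b] at this
  exact this.symm

lemma invol_odd {x : Δ} (h2 : x * x = 1) (hx : x ≠ 1) : π x = Multiplicative.ofAdd 1 := by
  have hcases : π x = 1 ∨ π x = Multiplicative.ofAdd 1 := by
    generalize π x = z; revert z; decide
  rcases hcases with hc | hc
  · exfalso
    apply hx
    apply σ_inj
    have hr : SemidirectProduct.rightHom (σ x) = 1 := hc
    have hform : σ x = SemidirectProduct.inl (σ x).left := by
      conv_lhs => rw [← SemidirectProduct.inl_left_mul_inr_right (σ x)]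
      rw [← SemidirectProduct.rightHom_eq_right, hr, map_one, mul_one]
    have hsq : SemidirectProduct.inl ((σ x).left * (σ x).left) = (1 : Gsd) := by
      rw [map_mul, ← hform, ← map_mul, h2, map_one]
    have hw : (σ x).left * (σ x).left = 1 := SemidirectProduct.inl_injective (by rw [hsq, map_one])
    have : (σ x).left = 1 := fg_sq hw
    rw [hform, this, map_one, map_one]
  · exact hc

lemma conj_helper (a b : Δ) : (R 0 * a * R 0) * (R 0 * b * R 0) = R 0 * (a * b) * R 0 := by
  calc (R 0 * a * R 0) * (R 0 * b * R 0) = R 0 * a * (R 0 * R 0) * b * R 0 := by group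
  _ = R 0 * (a * b) * R 0 := by rw [Rsq]; group

lemma conj_helper2 (a b : Δ) : (R 0 * a * R 0) * (R 0 * b) = R 0 * (a * b) := by
  calc (R 0 * a * R 0) * (R 0 * b) = R 0 * a * (R 0 * R 0) * b := by group
  _ = R 0 * (a * b) := by rw [Rsq]; group

lemma conj_inv_helper (a : Δ) : R 0 * a⁻¹ * R 0 = (R 0 * a * R 0)⁻¹ := by
  rw [mul_inv_rev, mul_inv_rev, Rinv, ← mul_assoc]

lemma conj0 : ∀ x ∈ Δplus, R 0 * x * R 0 ∈ Δplus := by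
  intro x hx
  induction hx using Subgroup.closure_induction with
  | mem t ht =>
    rcases ht with rfl | rfl | rfl
    · have : R 0 * (R 1 * R 2) * R 0 = (R 0 * R 1) * (R 2 * R 0) := by group
      rw [this]
      exact mul_mem (Subgroup.subset_closure (by right; right; rfl))
        (Subgroup.subset_closure (by right; left; rfl))
    · have : R 0 * (R 2 * R 0) * R 0 = R 0 * R 2 := by
        rw [mul_assoc, mul_assoc, Rsq, mul_one]
      rw [this, show R 0 * R 2 = (R 2 * R 0)⁻¹ by rw [mul_inv_rev, Rinv, Rinv]]
      exact inv_mem (Subgroup.subset_closure (by right; left; rfl))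
    · have : R 0 * (R 0 * R 1) * R 0 = R 1 * R 0 := by
        rw [← mul_assoc, Rsq, one_mul]
      rw [this, show R 1 * R 0 = (R 0 * R 1)⁻¹ by rw [mul_inv_rev, Rinv, Rinv]]
      exact inv_mem (Subgroup.subset_closure (by right; right; rfl))
  | one => rw [mul_one, Rsq]; exact Subgroup.one_mem _
  | mul a b _ _ ha hb => rw [← conj_helper]; exact mul_mem ha hb
  | inv a _ ha => rw [conj_inv_helper]; exact inv_mem ha

lemma π_mem_plus : ∀ x ∈ Δplus, π x = 1 := by
  intro x hx
  induction hx using Subgroup.closure_induction with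
  | mem t ht =>
    rcases ht with rfl | rfl | rfl <;> rw [map_mul, π_R, π_R] <;> decide
  | one => exact map_one π
  | mul a b _ _ ha hb => rw [map_mul, ha, hb, mul_one]
  | inv a _ ha => rw [map_inv, ha, inv_one]

/-- The coset subgroup used to show `ker π ≤ Δplus`. -/
def Kplus : Subgroup Δ where
  carrier := {x | (x ∈ Δplus ∧ π x = 1) ∨ (R 0 * x ∈ Δplus ∧ π x = Multiplicative.ofAdd 1)}
  one_mem' := Or.inl ⟨Subgroup.one_mem _, map_one π⟩
  mul_mem' := by
    rintro a b (⟨ha, hpa⟩ | ⟨ha, hpa⟩) (⟨hb, hpb⟩ | ⟨hb, hpb⟩)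
    · exact Or.inl ⟨mul_mem ha hb, by rw [map_mul, hpa, hpb, mul_one]⟩
    · refine Or.inr ⟨?_, by rw [map_mul, hpa, hpb, one_mul]⟩
      rw [← conj_helper2]
      exact mul_mem (conj0 a ha) hb
    · refine Or.inr ⟨?_, by rw [map_mul, hpa, hpb, mul_one]⟩
      rw [← mul_assoc]; exact mul_mem ha hb
    · refine Or.inl ⟨?_, by rw [map_mul, hpa, hpb]; decide⟩
      have : a * b = (R 0 * (R 0 * a) * R 0) * (R 0 * b) := by
        calc a * b = (R 0 * R 0) * a * (R 0 * R 0) * b := by rw [Rsq]; group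
        _ = (R 0 * (R 0 * a) * R 0) * (R 0 * b) := by group
      rw [this]; exact mul_mem (conj0 _ ha) hb
  inv_mem' := by
    rintro a (⟨ha, hpa⟩ | ⟨ha, hpa⟩)
    · exact Or.inl ⟨inv_mem ha, by rw [map_inv, hpa, inv_one]⟩
    · refine Or.inr ⟨?_, by rw [map_inv, hpa]; decide⟩
      have h2 := conj0 _ (inv_mem ha)
      have e : R 0 * (R 0 * a)⁻¹ * R 0 = R 0 * a⁻¹ := by
        rw [mul_inv_rev, Rinv]
        calc R 0 * (a⁻¹ * R 0) * R 0 = R 0 * a⁻¹ * (R 0 * R 0) := by group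
        _ = R 0 * a⁻¹ := by rw [Rsq, mul_one]
      rwa [e] at h2

lemma plus_iff (x : Δ) : x ∈ Δplus ↔ π x = 1 := by
  constructor
  · exact π_mem_plus x
  · intro hx
    have hK : x ∈ Kplus := by
      apply PresentedGroup.generated_by
      intro j
      show R j ∈ Kplus
      refine Or.inr ⟨?_, π_R j⟩
      fin_cases j
      · show R 0 * R 0 ∈ Δplus
        rw [Rsq]; exact Subgroup.one_mem _
      · show R 0 * R 1 ∈ Δplus
        exact Subgroup.subset_closure (by right; right; rfl)
      · show R 0 * R 2 ∈ Δplus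
        rw [show R 0 * R 2 = (R 2 * R 0)⁻¹ by rw [mul_inv_rev, Rinv, Rinv]]
        exact inv_mem (Subgroup.subset_closure (by right; left; rfl))
    rcases hK with ⟨h, _⟩ | ⟨_, hp⟩
    · exact h
    · exact absurd (hx ▸ hp.symm) (by decide)

/-- conjugation by each generator preserves the closure of `gens`. -/
lemma cmap (i : Fin 3) : ∀ x ∈ Subgroup.closure gens, R i * x * R i ∈ Subgroup.closure gens := by
  have hR1 : R 1 ∈ Subgroup.closure gens := Subgroup.subset_closure (by left; rfl)
  have hR2 : R 2 ∈ Subgroup.closure gens := Subgroup.subset_closure (by right; left; rfl)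
  have hc1 : (R 0)⁻¹ * R 1 * R 0 ∈ Subgroup.closure gens :=
    Subgroup.subset_closure (by right; right; left; rfl)
  have hc2 : (R 0)⁻¹ * R 2 * R 0 ∈ Subgroup.closure gens :=
    Subgroup.subset_closure (by right; right; right; rfl)
  fin_cases i
  · show ∀ x ∈ Subgroup.closure gens, R 0 * x * R 0 ∈ Subgroup.closure gens
    intro x hx
    induction hx using Subgroup.closure_induction with
    | mem t ht =>
      rcases ht with rfl | rfl | rfl | rfl
      · rw [show R 0 * R 1 * R 0 = (R 0)⁻¹ * R 1 * R 0 by rw [Rinv]]; exact hc1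
      · rw [show R 0 * R 2 * R 0 = (R 0)⁻¹ * R 2 * R 0 by rw [Rinv]]; exact hc2
      · rw [show R 0 * ((R 0)⁻¹ * R 1 * R 0) * R 0 = R 1 by
          rw [Rinv]
          calc R 0 * (R 0 * R 1 * R 0) * R 0 = (R 0 * R 0) * R 1 * (R 0 * R 0) := by group
          _ = R 1 := by rw [Rsq]; group]
        exact hR1
      · rw [show R 0 * ((R 0)⁻¹ * R 2 * R 0) * R 0 = R 2 by
          rw [Rinv]
          calc R 0 * (R 0 * R 2 * R 0) * R 0 = (R 0 * R 0) * R 2 * (R 0 * R 0) := by group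
          _ = R 2 := by rw [Rsq]; group]
        exact hR2
    | one => rw [mul_one, Rsq]; exact Subgroup.one_mem _
    | mul a b _ _ ha hb => rw [← conj_helper]; exact mul_mem ha hb
    | inv a _ ha => rw [conj_inv_helper]; exact inv_mem ha
  · show ∀ x ∈ Subgroup.closure gens, R 1 * x * R 1 ∈ Subgroup.closure gens
    intro x hx; exact mul_mem (mul_mem hR1 hx) hR1
  · show ∀ x ∈ Subgroup.closure gens, R 2 * x * R 2 ∈ Subgroup.closure gens
    intro x hx; exact mul_mem (mul_mem hR2 hx) hR2

lemma closure_gens_normal : (Subgroup.closure gens).Normal := by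
  rw [← Subgroup.normalizer_eq_top_iff]
  refine le_antisymm le_top ?_
  intro x _
  refine PresentedGroup.generated_by rels _ ?_ x
  intro j
  show R j ∈ Subgroup.normalizer ((Subgroup.closure gens : Subgroup Δ) : Set Δ)
  rw [Subgroup.mem_normalizer_iff]
  intro n
  constructor
  · intro hn
    rw [Rinv]
    exact cmap j n hn
  · intro hn
    have h2 := cmap j _ hn
    rw [show R j * (R j * n * (R j)⁻¹) * R j = n by
      rw [Rinv]
      calc R j * (R j * n * R j) * R j = (R j * R j) * n * (R j * R j) := by group
      _ = n := by rw [Rsq]; group] at h2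
    exact h2

lemma Δ0_eq : Δ0 = Subgroup.closure gens := by
  apply le_antisymm
  · haveI := closure_gens_normal
    apply Subgroup.normalClosure_le_normal
    rintro t (rfl | rfl)
    · exact Subgroup.subset_closure (by left; rfl)
    · exact Subgroup.subset_closure (by right; left; rfl)
  · rw [Subgroup.closure_le]
    rintro t (rfl | rfl | rfl | rfl)
    · exact Subgroup.subset_normalClosure (by left; rfl)
    · exact Subgroup.subset_normalClosure (by right; rfl)
    · have h1 : R 1 ∈ Δ0 := Subgroup.subset_normalClosure (by left; rfl)
      have := (Subgroup.normalClosure_normal (s := {R 1, R 2})).conj_mem _ h1 (R 0)⁻¹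
      simpa [mul_assoc, Δ0] using this
    · have h2 : R 2 ∈ Δ0 := Subgroup.subset_normalClosure (by right; rfl)
      have := (Subgroup.normalClosure_normal (s := {R 1, R 2})).conj_mem _ h2 (R 0)⁻¹
      simpa [mul_assoc, Δ0] using this

lemma gens_sq {t : Δ} (ht : t ∈ gens) : t * t = 1 := by
  have key : ∀ i : Fin 3, ((R 0)⁻¹ * R i * R 0) * ((R 0)⁻¹ * R i * R 0) = 1 := by
    intro i
    rw [Rinv]
    calc (R 0 * R i * R 0) * (R 0 * R i * R 0)
        = R 0 * R i * (R 0 * R 0) * R i * R 0 := by group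
    _ = R 0 * (R i * R i) * R 0 := by rw [Rsq]; group
    _ = 1 := by rw [Rsq, mul_one, Rsq]
  rcases ht with rfl | rfl | rfl | rfl
  · exact Rsq 1
  · exact Rsq 2
  · exact key 1
  · exact key 2

lemma gens_odd {t : Δ} (ht : t ∈ gens) : π t = Multiplicative.ofAdd 1 := by
  have key : ∀ i : Fin 3, π ((R 0)⁻¹ * R i * R 0) = Multiplicative.ofAdd 1 := by
    intro i
    rw [map_mul, map_mul, map_inv, π_R, π_R]
    decide
  rcases ht with rfl | rfl | rfl | rfl
  · exact π_R 1
  · exact π_R 2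
  · exact key 1
  · exact key 2

theorem stmt17 (φ : Δ0 →* Δ) (hφ : Function.Surjective φ)
    (H : Subgroup Δ) (hH : ¬ H ≤ Δplus) :
    ¬ preim φ H ≤ Δplus := by
  intro hle
  obtain ⟨h, hhH, hhp⟩ := SetLike.not_le_iff_exists.mp hH
  obtain ⟨g, hg⟩ := hφ h
  have key : ∀ y : Δ0, φ y ∈ H → π (y : Δ) = 1 := by
    intro y hy
    have hmem : (y : Δ) ∈ preim φ H :=
      Subgroup.mem_map.mpr ⟨y, Subgroup.mem_comap.mpr hy, rfl⟩
    exact (plus_iff _).mp (hle hmem)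
  by_cases hk : ∃ t : Δ0, (t : Δ) ∈ gens ∧ φ t = 1
  · obtain ⟨t, htg, htk⟩ := hk
    have e2 := key g (by rw [hg]; exact hhH)
    have e1 := key (g * t) (by rw [map_mul, hg, htk, mul_one]; exact hhH)
    rw [show ((g * t : Δ0) : Δ) = (g : Δ) * (t : Δ) from rfl, map_mul, e2, one_mul,
      gens_odd htg] at e1
    exact absurd e1 (by decide)
  · push_neg at hk
    have equils : ∀ x, x ∈ Subgroup.closure gens → ∀ hx0 : x ∈ Δ0, π (φ ⟨x, hx0⟩) = π x := by
      intro x hx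
      induction hx using Subgroup.closure_induction with
      | mem t ht =>
        intro h0
        have hsub : (⟨t, h0⟩ * ⟨t, h0⟩ : Δ0) = 1 := by
          ext
          exact gens_sq ht
        have h2 : φ ⟨t, h0⟩ * φ ⟨t, h0⟩ = 1 := by rw [← map_mul, hsub, map_one]
        have hne : φ ⟨t, h0⟩ ≠ 1 := hk ⟨t, h0⟩ ht
        rw [invol_odd h2 hne, gens_odd ht]
      | one =>
        intro h0
        rw [show (⟨1, h0⟩ : Δ0) = 1 from rfl, map_one, map_one]
      | mul a b ha hb iha ihb =>
        intro h0
        have ha0 : a ∈ Δ0 := by rw [Δ0_eq]; exact ha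
        have hb0 : b ∈ Δ0 := by rw [Δ0_eq]; exact hb
        rw [show (⟨a * b, h0⟩ : Δ0) = ⟨a, ha0⟩ * ⟨b, hb0⟩ from rfl, map_mul, map_mul,
          iha ha0, ihb hb0]
        exact (map_mul π a b).symm
      | inv a ha iha =>
        intro h0
        have ha0 : a ∈ Δ0 := by rw [Δ0_eq]; exact ha
        rw [show (⟨a⁻¹, h0⟩ : Δ0) = (⟨a, ha0⟩ : Δ0)⁻¹ from rfl, map_inv, map_inv, iha ha0]
        exact (map_inv π a).symm
    have e2 := key g (by rw [hg]; exact hhH)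
    have hgc : (g : Δ) ∈ Subgroup.closure gens := by rw [← Δ0_eq]; exact g.2
    have := equils (g : Δ) hgc g.2
    rw [show (⟨(g : Δ), g.2⟩ : Δ0) = g from rfl, hg] at this
    exact hhp ((plus_iff h).mpr (this.trans e2))
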